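/- Let γ be a finitely additive probability on 𝒫(ℕ) vanishing on finite sets, and for each N let P_N be the uniform probability on S_N = {a₁,...,a_N} extended as an i.i.d. product to sequences; define P(C) = ∫ P_N(C) dγ(N). Then for the coordinate variables ξ₁, ξ₂, ..., one has P{ξᵢ = a_k} = 0 for every i and k, yet P(Ω) = 1; in particular the events {ξ₁ = a_k}, k ∈ ℕ, form a countable partition of the sure event each member of which has probability zero. -/
import Mathlib


open Filter Topology

/-- Mixing the i.i.d. uniform-on-`{0,...,N-1}` laws `P_N` on `Ω = ℕ → ℕ` against a
diffuse finitely additive `γ` on `ℕ` yields a finitely additive probability `P` with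
`P{ξᵢ = k} = 0` for all `i, k`, although the events `{ξ₀ = k}` partition the sure event. -/
theorem mixture_kills_singletons
    (PN : ℕ → Set (ℕ → ℕ) → ℝ)
    (hPNnonneg : ∀ N A, 0 ≤ PN N A)
    (hPNtotal : ∀ N, PN N Set.univ = 1)
    (hPNadd : ∀ N, ∀ A B : Set (ℕ → ℕ), Disjoint A B →
      PN N (A ∪ B) = PN N A + PN N B)
    -- each coordinate is uniform on `{0,...,N-1}` under `P_N`
    (hunif : ∀ N, 1 ≤ N → ∀ i k : ℕ,
      PN N {ω | ω i = k} = if k < N then 1 / (N : ℝ) else 0)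
    (P : Set (ℕ → ℕ) → ℝ)
    (hPnonneg : ∀ A, 0 ≤ P A)
    (hPadd : ∀ A B : Set (ℕ → ℕ), Disjoint A B → P (A ∪ B) = P A + P B)
    -- `P = ∫ P_N dγ(N)` with `γ` diffuse: whenever `P_N(C)` converges, the
    -- integral equals the limit
    (hmix : ∀ (C : Set (ℕ → ℕ)) (L : ℝ),
      Tendsto (fun N => PN N C) atTop (nhds L) → P C = L) :
    (∀ i k : ℕ, P {ω | ω i = k} = 0) ∧
    P Set.univ = 1 ∧
    (⋃ k : ℕ, {ω : ℕ → ℕ | ω 0 = k}) = Set.univ ∧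
    Pairwise (Function.onFun Disjoint fun k : ℕ => {ω : ℕ → ℕ | ω 0 = k}) := by
  refine ⟨?_, ?_, ?_, ?_⟩
  · intro i k
    apply hmix
    have h : Tendsto (fun N : ℕ => 1 / (N : ℝ)) atTop (nhds 0) :=
      tendsto_one_div_atTop_nhds_zero_nat
    refine h.congr' ?_
    filter_upwards [eventually_ge_atTop (k + 1)] with N hN
    rw [hunif N (le_trans (Nat.le_add_left 1 k) hN) i k, if_pos (Nat.lt_of_succ_le hN)]
  · apply hmix
    have : (fun N => PN N Set.univ) = fun _ => (1 : ℝ) := funext hPNtotal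
    rw [this]
    exact tendsto_const_nhds
  · ext ω
    simp
  · intro j k hjk
    simp only [Function.onFun, Set.disjoint_left]
    intro ω hω hω'
    exact hjk (hω.symm.trans hω')
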